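/- (Theorem 3, dual rate) Let σ > 0 and α ∈ (1/2, 1], and suppose the tolerance sequence is η_k = σ/k^{2α} for all k ≥ 1. Then for all k ≥ 1: δ_k ≤ C/k^α, where C := 4√(3((3/2)θσ + 1)σ/θ) + (4/3)·max{δ₁, 4/θ}. -/

import Mathlib

open RealInnerProductSpace Filter

lemma gradient_convex_ineq {E : Type*} [NormedAddCommGroup E] [InnerProductSpace ℝ E]
    [CompleteSpace E] {f : E → ℝ} {f' : E → E}
    (hf : ConvexOn ℝ Set.univ f) (hf' : ∀ x, HasGradientAt f (f' x) x) (p q : E) :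
    f p + ⟪f' p, q - p⟫ ≤ f q := by
  have hc : HasDerivAt (fun t : ℝ => p + t • (q - p)) (q - p) 0 := by
    simpa using ((hasDerivAt_id (0:ℝ)).smul_const (q - p)).const_add p
  have h1 : HasFDerivAt f (InnerProductSpace.toDual ℝ E (f' p)) (p + (0:ℝ) • (q - p)) := by
    simpa using (hasGradientAt_iff_hasFDerivAt.mp (hf' p))
  have hφd : HasDerivAt (fun t : ℝ => f (p + t • (q - p))) ⟪f' p, q - p⟫ 0 := by
    have := h1.comp_hasDerivAt 0 hc
    simp [InnerProductSpace.toDual_apply_apply] at this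
    exact this
  have hφc : ConvexOn ℝ Set.univ (fun t : ℝ => f (p + t • (q - p))) := by
    have h2 := hf.comp_affineMap (AffineMap.lineMap p q : ℝ →ᵃ[ℝ] E)
    have h3 : (fun t : ℝ => f (p + t • (q - p))) = f ∘ (AffineMap.lineMap p q : ℝ →ᵃ[ℝ] E) := by
      funext t
      simp [AffineMap.lineMap_apply]
      congr 1
      module
    rw [h3]
    simpa using h2
  have hs := hφc.le_slope_of_hasDerivAt (Set.mem_univ (0:ℝ)) (Set.mem_univ (1:ℝ)) one_pos hφd
  rw [slope_def_field] at hs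
  simp at hs
  linarith

lemma ial_inner1 {F : Type*} [NormedAddCommGroup F] [InnerProductSpace ℝ F]
    (l u v : F) (β : ℝ) :
    ⟪l + β • u, u - v⟫ = ⟪l, u⟫ - ⟪l, v⟫ + β*‖u‖^2 - β*⟪u, v⟫ := by
  rw [inner_add_left, real_inner_smul_left, inner_sub_right, inner_sub_right,
    real_inner_self_eq_norm_sq]
  ring

lemma ial_inner2 {F : Type*} [NormedAddCommGroup F] [InnerProductSpace ℝ F]
    (u v : F) : ‖v - u‖^2 = ‖v‖^2 - 2*⟪u, v⟫ + ‖u‖^2 := by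
  rw [norm_sub_sq_real, real_inner_comm]

lemma ial_inner3 {F : Type*} [NormedAddCommGroup F] [InnerProductSpace ℝ F]
    (a u : F) (β : ℝ) :
    ‖a + β • u‖^2 = ‖a‖^2 + 2*(β*⟪a, u⟫) + β^2*‖u‖^2 := by
  rw [norm_add_sq_real, real_inner_smul_right, norm_smul]
  simp [Real.norm_eq_abs, mul_pow, sq_abs]
  try ring

lemma ial_inner4 {F : Type*} [NormedAddCommGroup F] [InnerProductSpace ℝ F]
    (l u v : F) (β : ℝ) :
    ⟪l + β • u, v⟫ = ⟪l, v⟫ + β*⟪u, v⟫ := by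
  rw [inner_add_left, real_inner_smul_left]

set_option maxHeartbeats 2000000 in
theorem ial_dual_rate
    {n m : ℕ}
    (A : EuclideanSpace ℝ (Fin n) →L[ℝ] EuclideanSpace ℝ (Fin m))
    (b : EuclideanSpace ℝ (Fin m))
    (f g : EuclideanSpace ℝ (Fin n) → ℝ)
    (f' : EuclideanSpace ℝ (Fin n) → EuclideanSpace ℝ (Fin n))
    (hf : ConvexOn ℝ Set.univ f)
    (hf' : ∀ x, HasGradientAt f (f' x) x)
    (hg : ConvexOn ℝ Set.univ g)
    (β : ℝ) (hβ : 0 < β)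
    (L : EuclideanSpace ℝ (Fin n) → EuclideanSpace ℝ (Fin m) → ℝ)
    (hL : ∀ x lam, L x lam
        = f x + ⟪lam, A x - b⟫ + β / 2 * ‖A x - b‖ ^ 2 + g x)
    (d : EuclideanSpace ℝ (Fin m) → ℝ)
    (hd : ∀ lam, IsLeast (Set.range fun x => L x lam) (d lam))
    (x : ℕ → EuclideanSpace ℝ (Fin n))
    (lam : ℕ → EuclideanSpace ℝ (Fin m))
    (σ α : ℝ) (hσ : 0 < σ) (hα : 1 / 2 < α ∧ α ≤ 1)
    (η : ℕ → ℝ)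
    (hη : ∀ k, 1 ≤ k → η k = σ / (k : ℝ) ^ (2 * α))
    (happrox : ∀ k, 1 ≤ k → ∀ y,
        ⟪f' (x (k + 1)) + A.adjoint (lam k + β • (A (x (k + 1)) - b)), x (k + 1) - y⟫
          + g (x (k + 1)) - g y ≤ η k)
    (hlam : ∀ k, 1 ≤ k → lam (k + 1) = lam k + β • (A (x (k + 1)) - b))
    (lamstar : EuclideanSpace ℝ (Fin m))
    (hstar : ∀ μ, d μ ≤ d lamstar)
    (δ : ℕ → ℝ)
    (hδ : ∀ k, δ k = d lamstar - d (lam k))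
    (B : ℝ)
    (hB : B = Real.sqrt (‖lam 1 - lamstar‖ ^ 2 + 2 * β * ∑' k : ℕ, η (k + 1)))
    (θ : ℝ)
    (hθ : θ = β / (4 * B ^ 2))
    (C : ℝ)
    (hC : C = 4 * Real.sqrt (3 * (3 / 2 * θ * σ + 1) * σ / θ)
        + 4 / 3 * max (δ 1) (4 / θ)) :
    ∀ k, 1 ≤ k → δ k ≤ C / (k : ℝ) ^ α := by
  obtain ⟨hα1, hα2⟩ := hα
  have hα0 : 0 < α := by linarith
  have hδ0 : ∀ k, 0 ≤ δ k := fun k => by rw [hδ]; linarith [hstar (lam k)]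
  have hη0 : ∀ k, 1 ≤ k → 0 < η k := by
    intro k hk
    rw [hη k hk]
    have hkpos : (0:ℝ) < (k:ℝ) := by exact_mod_cast hk
    have := Real.rpow_pos_of_pos hkpos (2*α)
    positivity
  -- key subproblem inequality
  have hkey : ∀ k, 1 ≤ k → ∀ y,
      L (x (k+1)) (lam k) + β/2 * ‖A y - A (x (k+1))‖^2 ≤ L y (lam k) + η k := by
    intro k hk y
    have hgrad := gradient_convex_ineq hf hf' (x (k+1)) y
    have happ := happrox k hk y
    have e1 : A (x (k+1)) - A y = (A (x (k+1)) - b) - (A y - b) := by abel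
    have e2 : A y - A (x (k+1)) = (A y - b) - (A (x (k+1)) - b) := by abel
    rw [inner_add_left, ContinuousLinearMap.adjoint_inner_left, map_sub, e1,
      ial_inner1] at happ
    have E4 : ⟪f' (x (k+1)), y - x (k+1)⟫ = -⟪f' (x (k+1)), x (k+1) - y⟫ := by
      rw [← inner_neg_right]; congr 1; abel
    rw [E4] at hgrad
    rw [hL, hL, e2, ial_inner2 (A (x (k+1)) - b) (A y - b)]
    linarith only [hgrad, happ]
  -- the approximate solution is an approximate minimizer
  have hLmin : ∀ k, 1 ≤ k → L (x (k+1)) (lam k) ≤ d (lam k) + η k := by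
    intro k hk
    obtain ⟨y, hy⟩ := (hd (lam k)).1
    have h1 := hkey k hk y
    have h2 : (0:ℝ) ≤ β/2 * ‖A y - A (x (k+1))‖^2 := by positivity
    have hy' : L y (lam k) = d (lam k) := hy
    linarith only [h1, h2, hy']
  -- dagger inequality
  have hdag : ∀ k, 1 ≤ k → ∀ μ,
      d μ ≤ d (lam k) + η k + ⟪μ - lam k, A (x (k+1)) - b⟫ := by
    intro k hk μ
    have h1 : d μ ≤ L (x (k+1)) μ := (hd μ).2 ⟨x (k+1), rfl⟩
    have h2 : L (x (k+1)) μ = L (x (k+1)) (lam k) + ⟪μ - lam k, A (x (k+1)) - b⟫ := by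
      rw [hL, hL, inner_sub_left]; ring
    have h3 := hLmin k hk
    linarith only [h1, h2, h3]
  -- ascent inequality (A)
  have hAineq : ∀ k, 1 ≤ k → δ (k+1) + β/2 * ‖A (x (k+1)) - b‖^2 ≤ δ k + η k := by
    intro k hk
    obtain ⟨y, hy⟩ := (hd (lam (k+1))).1
    have h1 := hkey k hk y
    have e2 : A y - A (x (k+1)) = (A y - b) - (A (x (k+1)) - b) := by abel
    rw [e2, ial_inner2 (A (x (k+1)) - b) (A y - b)] at h1
    have h2 : L y (lam (k+1)) = L y (lam k)
        + β * ⟪A (x (k+1)) - b, A y - b⟫ := by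
      rw [hL, hL, hlam k hk, ial_inner4]
      ring
    have h3 : d (lam k) ≤ L (x (k+1)) (lam k) := (hd (lam k)).2 ⟨x (k+1), rfl⟩
    have hv2 : (0:ℝ) ≤ β/2 * ‖A y - b‖^2 := by positivity
    have hy' : L y (lam (k+1)) = d (lam (k+1)) := hy
    rw [hδ k, hδ (k+1)]
    rw [hy'] at h2
    linarith only [h1, h2, h3, hv2]
  -- specialization of dagger at lamstar
  have hδdag : ∀ k, 1 ≤ k → δ k ≤ η k + ⟪lamstar - lam k, A (x (k+1)) - b⟫ := by
    intro k hk
    have := hdag k hk lamstar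
    rw [hδ k]
    linarith only [this]
  -- one-step bound on multipliers (C)
  have hC1 : ∀ k, 1 ≤ k →
      ‖lam (k+1) - lamstar‖^2 ≤ ‖lam k - lamstar‖^2 + 4*β*η k := by
    intro k hk
    have e1 : lam (k+1) - lamstar = (lam k - lamstar) + β • (A (x (k+1)) - b) := by
      rw [hlam k hk]; abel
    have F1 := hδdag k hk
    have F3 : ⟪lamstar - lam k, A (x (k+1)) - b⟫
        = -⟪lam k - lamstar, A (x (k+1)) - b⟫ := by
      rw [← inner_neg_left]; congr 1; abel
    rw [F3] at F1
    have F2 := hAineq k hk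
    have G1 : 2*β*⟪lam k - lamstar, A (x (k+1)) - b⟫ ≤ 2*β*(η k - δ k) :=
      mul_le_mul_of_nonneg_left (by linarith) (by positivity)
    have G2 : 2*β*(β/2 * ‖A (x (k+1)) - b‖^2) ≤ 2*β*(δ k + η k - δ (k+1)) :=
      mul_le_mul_of_nonneg_left (by linarith) (by positivity)
    have G3 : 0 ≤ 2*β*δ (k+1) := by
      have := hδ0 (k+1); positivity
    rw [e1, ial_inner3]
    linarith only [G1, G2, G3]
  -- summability and positivity of B
  have hsum : Summable (fun j : ℕ => η (j+1)) := by
    have h1 : Summable (fun j : ℕ => σ * (1 / ((j:ℝ)) ^ (2*α))) := by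
      apply Summable.mul_left
      exact (Real.summable_one_div_nat_rpow).2 (by linarith)
    have h2 := (summable_nat_add_iff 1).2 h1
    apply h2.congr
    intro j
    rw [hη (j+1) (by omega)]
    push_cast
    ring
  have htsum0 : 0 < ∑' j : ℕ, η (j+1) :=
    Summable.tsum_pos hsum (fun j => (hη0 (j+1) (by omega)).le) 0 (hη0 1 (by omega))
  have hin0 : (0:ℝ) ≤ ‖lam 1 - lamstar‖ ^ 2 + 2 * β * ∑' k : ℕ, η (k + 1) := by
    nlinarith [sq_nonneg ‖lam 1 - lamstar‖]
  have hBsq : B^2 = ‖lam 1 - lamstar‖ ^ 2 + 2 * β * ∑' k : ℕ, η (k + 1) := by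
    rw [hB, Real.sq_sqrt hin0]
  have hB2pos : 0 < B^2 := by
    rw [hBsq]; nlinarith [sq_nonneg ‖lam 1 - lamstar‖]
  have hθpos : 0 < θ := by
    rw [hθ]; positivity
  -- boundedness of multipliers
  have hbnd : ∀ k, 1 ≤ k → ‖lam k - lamstar‖^2 ≤ 2*B^2 := by
    have Q : ∀ k : ℕ, ‖lam (k+1) - lamstar‖^2
        ≤ ‖lam 1 - lamstar‖^2 + 4*β*∑ j ∈ Finset.range k, η (j+1) := by
      intro k
      induction k with
      | zero => simp
      | succ j ih =>
        have := hC1 (j+1) (by omega)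
        rw [Finset.sum_range_succ]
        linarith only [this, ih]
    intro k hk
    obtain ⟨j, rfl⟩ : ∃ j, k = j + 1 := ⟨k - 1, by omega⟩
    have h1 := Q j
    have h2 : ∑ i ∈ Finset.range j, η (i+1) ≤ ∑' i : ℕ, η (i+1) :=
      Summable.sum_le_tsum (Finset.range j) (fun i _ => (hη0 (i+1) (by omega)).le) hsum
    have h3 : 4*β*∑ i ∈ Finset.range j, η (i+1) ≤ 4*β*∑' i : ℕ, η (i+1) :=
      mul_le_mul_of_nonneg_left h2 (by positivity)
    have h4 := sq_nonneg ‖lam 1 - lamstar‖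
    linarith only [h1, h3, h4, hBsq]
  -- inequality (B')
  have hB2' : ∀ k, 1 ≤ k →
      δ (k+1) ≤ 2*η k + ‖lam k - lamstar‖ * ‖A (x (k+1)) - b‖ := by
    intro k hk
    have F2 := hAineq k hk
    have F1 := hδdag k hk
    have cs : ⟪lamstar - lam k, A (x (k+1)) - b⟫
        ≤ ‖lam k - lamstar‖ * ‖A (x (k+1)) - b‖ := by
      calc ⟪lamstar - lam k, A (x (k+1)) - b⟫
          ≤ ‖lamstar - lam k‖ * ‖A (x (k+1)) - b‖ := real_inner_le_norm _ _
        _ = ‖lam k - lamstar‖ * ‖A (x (k+1)) - b‖ := by rw [norm_sub_rev]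
    have h0 : (0:ℝ) ≤ β/2 * ‖A (x (k+1)) - b‖^2 := by positivity
    linarith only [F1, F2, cs, h0]
  -- recursion (R)
  have hR : ∀ k, 1 ≤ k → 2*η k ≤ δ (k+1) →
      δ (k+1) + θ*(δ (k+1) - 2*η k)^2 ≤ δ k + η k := by
    intro k hk ht
    have ht0 : 0 ≤ δ (k+1) - 2*η k := by linarith
    have hcs : δ (k+1) - 2*η k ≤ ‖lam k - lamstar‖ * ‖A (x (k+1)) - b‖ := by
      have := hB2' k hk; linarith only [this]
    have h1 : (δ (k+1) - 2*η k)^2 ≤ (‖lam k - lamstar‖ * ‖A (x (k+1)) - b‖)^2 :=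
      pow_le_pow_left₀ ht0 hcs 2
    have h2 : (‖lam k - lamstar‖ * ‖A (x (k+1)) - b‖)^2
        ≤ 2*B^2*‖A (x (k+1)) - b‖^2 := by
      rw [mul_pow]
      exact mul_le_mul_of_nonneg_right (hbnd k hk) (sq_nonneg _)
    have h4 : θ*(δ (k+1) - 2*η k)^2 ≤ θ*(2*B^2*‖A (x (k+1)) - b‖^2) :=
      mul_le_mul_of_nonneg_left (h1.trans h2) hθpos.le
    have h5 : θ*(2*B^2*‖A (x (k+1)) - b‖^2) = β/2*‖A (x (k+1)) - b‖^2 := by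
      rw [hθ]
      have hB0 : B ≠ 0 := by rintro rfl; norm_num at hB2pos
      field_simp
      ring
    have h6 := hAineq k hk
    rw [h5] at h4
    linarith only [h4, h6]
  -- constants
  set S := 4 * Real.sqrt (3 * (3 / 2 * θ * σ + 1) * σ / θ) with hSdef
  set M := max (δ 1) (4 / θ) with hMdef
  have hM4 : 4/θ ≤ M := le_max_right _ _
  have hMδ : δ 1 ≤ M := le_max_left _ _
  have hM0 : 0 ≤ M := le_trans (hδ0 1) hMδ
  have hθM : 4 ≤ θ*M := by
    calc (4:ℝ) = θ * (4/θ) := by field_simp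
      _ ≤ θ * M := mul_le_mul_of_nonneg_left hM4 hθpos.le
  have hS0 : 0 ≤ S := by rw [hSdef]; positivity
  have hSsq : S^2 = 72*σ^2 + 48*(σ/θ) := by
    rw [hSdef, mul_pow, Real.sq_sqrt (by positivity)]
    field_simp
    ring
  have hσθ : θ*(σ/θ) = σ := by field_simp
  have hS8 : 8*σ < S := by
    have hd0 : 0 < σ/θ := by positivity
    nlinarith [hSsq, hS0, hσ]
  have hCdef : C = S + 4/3*M := hC
  have hC4σ : 4*σ ≤ C := by rw [hCdef]; linarith
  have hC0 : 0 ≤ C := by rw [hCdef]; linarith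
  have hCkey : C + σ ≤ θ*(C/2 - 2*σ)^2 := by
    have hQ : S/4 + 2/3*M ≤ C/2 - 2*σ := by rw [hCdef]; linarith
    have hQ0 : (0:ℝ) ≤ S/4 + 2/3*M := by linarith
    have h1 : θ*(S/4 + 2/3*M)^2 ≤ θ*(C/2 - 2*σ)^2 :=
      mul_le_mul_of_nonneg_left (pow_le_pow_left₀ hQ0 hQ 2) hθpos.le
    have p1 : 4*S ≤ (θ*M)*S := mul_le_mul_of_nonneg_right hθM hS0
    have p2 : 4*M ≤ (θ*M)*M := mul_le_mul_of_nonneg_right hθM hM0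
    have p3 : θ*S^2 = 72*(θ*σ^2)+48*σ := by
      rw [hSsq]
      calc θ*(72*σ^2 + 48*(σ/θ)) = 72*(θ*σ^2) + 48*(θ*(σ/θ)) := by ring
        _ = 72*(θ*σ^2)+48*σ := by rw [hσθ]
    have h2 : C + σ ≤ θ*(S/4 + 2/3*M)^2 := by
      rw [hCdef]
      nlinarith [p1, p2, p3, mul_nonneg hθpos.le (sq_nonneg σ), hS0, hM0, hσ]
    linarith
  -- main induction
  intro k hk
  induction k, hk using Nat.le_induction with
  | base =>
    have h1 : ((1:ℕ):ℝ)^α = 1 := by norm_num [Real.one_rpow]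
    rw [h1, hCdef]
    linarith
  | succ k hk ih =>
    have hkR : (1:ℝ) ≤ (k:ℝ) := by exact_mod_cast hk
    have hcast : (((k+1:ℕ)):ℝ) = (k:ℝ)+1 := by push_cast; ring
    have ha1 : 1 ≤ (k:ℝ)^α := by
      calc (1:ℝ) = (1:ℝ)^α := (Real.one_rpow α).symm
        _ ≤ (k:ℝ)^α := Real.rpow_le_rpow (by norm_num) hkR hα0.le
    have ha0 : (0:ℝ) < (k:ℝ)^α := lt_of_lt_of_le one_pos ha1
    have haa' : (k:ℝ)^α ≤ ((k:ℝ)+1)^α :=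
      Real.rpow_le_rpow (by linarith) (by linarith) hα0.le
    have ha'0 : (0:ℝ) < ((k:ℝ)+1)^α := lt_of_lt_of_le ha0 haa'
    have ha'2 : ((k:ℝ)+1)^α ≤ 2*(k:ℝ)^α := by
      have s1 : ((k:ℝ)+1)^α ≤ ((2*(k:ℝ)))^α :=
        Real.rpow_le_rpow (by linarith) (by linarith) hα0.le
      have s2 : ((2*(k:ℝ)))^α = (2:ℝ)^α * (k:ℝ)^α :=
        Real.mul_rpow (by norm_num) (by linarith)
      have s3 : (2:ℝ)^α ≤ 2 := by
        have := Real.rpow_le_rpow_of_exponent_le (by norm_num : (1:ℝ) ≤ 2) hα2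
        rwa [Real.rpow_one] at this
      calc ((k:ℝ)+1)^α ≤ (2:ℝ)^α * (k:ℝ)^α := s2 ▸ s1
        _ ≤ 2*(k:ℝ)^α := mul_le_mul_of_nonneg_right s3 ha0.le
    have ha'1 : ((k:ℝ)+1)^α ≤ (k:ℝ)^α + 1 := by
      have h := NNReal.rpow_add_le_add_rpow ((k:NNReal)) 1 hα0.le hα2
      have h2 := NNReal.coe_le_coe.mpr h
      push_cast [NNReal.coe_rpow] at h2
      simpa [Real.one_rpow] using h2
    have hk2 : (k:ℝ)^(2*α) = ((k:ℝ)^α)^2 := by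
      rw [show (2:ℝ)*α = α*2 by ring, Real.rpow_mul (by linarith), Real.rpow_two]
    set a := (k:ℝ)^α
    set a' := ((k:ℝ)+1)^α
    set p := (a:ℝ)⁻¹ with hpdef
    set q := (a':ℝ)⁻¹ with hqdef
    have hηk : η k = σ * p^2 := by
      rw [hη k hk, hk2, hpdef]
      field_simp
    have hp0 : 0 < p := by positivity
    have hq0 : 0 < q := by positivity
    have hp1 : p ≤ 1 := by rw [hpdef]; exact inv_le_one_of_one_le₀ ha1
    have hqp : q ≤ p := by
      rw [hpdef, hqdef]
      exact inv_anti₀ ha0 haa'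
    have hq2 : p ≤ 2*q := by
      rw [hpdef, hqdef, show (2:ℝ)*(a')⁻¹ = (a'/2)⁻¹ by field_simp]
      apply inv_anti₀ (by linarith) (by linarith)
    have hpq : p - q ≤ p^2 := by
      have e : p - q = p*q*(a' - a) := by
        rw [hpdef, hqdef]
        field_simp
      rw [e]
      calc p*q*(a'-a) ≤ p*q*1 :=
            mul_le_mul_of_nonneg_left (by linarith) (by positivity)
        _ = p*q := by ring
        _ ≤ p*p := mul_le_mul_of_nonneg_left hqp hp0.le
        _ = p^2 := by ring
    -- inequality (i)
    have hi : 2*η k ≤ C*q := by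
      rw [hηk]
      linarith only [mul_le_mul_of_nonneg_left hq2 hσ.le,
        mul_le_mul_of_nonneg_left hp1 (mul_nonneg hσ.le hp0.le),
        mul_le_mul_of_nonneg_right hC4σ hq0.le]
    -- inequality (ii)
    have hii : C*p + σ*p^2 ≤ C*q + θ*(C*q - 2*(σ*p^2))^2 := by
      have t1 : C*p ≤ 2*(C*q) := by
        linarith only [mul_le_mul_of_nonneg_left hq2 hC0]
      have t2 : 2*(σ*p^2) ≤ 2*σ*p := by
        linarith only [mul_le_mul_of_nonneg_left hp1 (mul_nonneg hσ.le hp0.le)]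
      have h1 : (C/2 - 2*σ)*p ≤ C*q - 2*(σ*p^2) := by linarith only [t1, t2]
      have hC2σ0 : (0:ℝ) ≤ C/2 - 2*σ := by linarith
      have h1' : (0:ℝ) ≤ (C/2 - 2*σ)*p := mul_nonneg hC2σ0 hp0.le
      have h2 : θ*((C/2 - 2*σ)*p)^2 ≤ θ*(C*q - 2*(σ*p^2))^2 :=
        mul_le_mul_of_nonneg_left (pow_le_pow_left₀ h1' h1 2) hθpos.le
      have h3 : (C+σ)*p^2 ≤ θ*((C/2 - 2*σ)*p)^2 := by
        calc (C+σ)*p^2 ≤ (θ*(C/2 - 2*σ)^2)*p^2 :=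
              mul_le_mul_of_nonneg_right hCkey (sq_nonneg p)
          _ = θ*((C/2 - 2*σ)*p)^2 := by ring
      have h4 : C*p - C*q ≤ C*p^2 := by
        calc C*p - C*q = C*(p - q) := by ring
          _ ≤ C*p^2 := mul_le_mul_of_nonneg_left hpq hC0
      linarith only [h2, h3, h4]
    -- conclude
    have hgoal : δ (k+1) ≤ C*q := by
      by_contra hcon
      push_neg at hcon
      have h2η : 2*η k ≤ δ (k+1) := le_trans hi hcon.le
      have hRk := hR k hk h2η
      have ihq : δ k ≤ C*p := by
        have e : C / (k:ℝ)^α = C*p := by rw [hpdef, div_eq_mul_inv]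
        rw [e] at ih; exact ih
      have hm : θ*(C*q - 2*η k)^2 ≤ θ*(δ (k+1) - 2*η k)^2 := by
        apply mul_le_mul_of_nonneg_left _ hθpos.le
        apply pow_le_pow_left₀ (by linarith) (by linarith)
      rw [hηk] at hRk hm
      linarith only [hRk, hm, hii, ihq, hcon]
    calc δ (k+1) ≤ C*q := hgoal
      _ = C / (((k+1:ℕ)):ℝ)^α := by rw [hqdef, hcast, div_eq_mul_inv]
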